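/- Let (J,<_J) be a linear order enumerated injectively as ⟨y_α : α < λ⟩, and let σ < λ be a regular infinite cardinal with σ + 1 < λ. Let U be the ultrafilter on Int(L(J)) generated by the intervals [(y_{σ+1},α), (y_{σ+1},σ)) for α < σ. Then every subset Y of Int(L(J)) \ {0} that is dense in U (i.e., every element of U contains a member of Y) has cardinality at least σ. Hence π-character πχ(U) ≥ σ. -/

import Mathlib

open Cardinal Set

/-- The interval algebra of a linear order `L`. -/
inductive InIntervalAlgebra (L : Type*) [LinearOrder L] : Set L → Prop
  | ico (a b : L) : InIntervalAlgebra L (Set.Ico a b)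
  | empty : InIntervalAlgebra L ∅
  | compl {s : Set L} : InIntervalAlgebra L s → InIntervalAlgebra L sᶜ
  | union {s t : Set L} : InIntervalAlgebra L s → InIntervalAlgebra L t →
      InIntervalAlgebra L (s ∪ t)

/-- `U` is an ultrafilter on the set algebra `A ⊆ 𝒫(L)`. -/
def IsUltrafilterOn {L : Type*} (A U : Set (Set L)) : Prop :=
  U ⊆ A ∧ ∅ ∉ U ∧ (∀ s ∈ U, ∀ t ∈ A, s ⊆ t → t ∈ U) ∧
    (∀ s ∈ U, ∀ t ∈ U, s ∩ t ∈ U) ∧ (∀ s ∈ A, s ∈ U ∨ sᶜ ∈ U)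

/-- Let `J` be enumerated injectively by `⟨y α : α < λ⟩`, let `L` be (a copy of)
`L(J)`, and let `σ < λ` be regular infinite with `σ + 1 < λ`.  Let `U` be the
ultrafilter on `Int(L(J))` generated by the intervals
`[(y (σ+1), α), (y (σ+1), σ))` for `α < σ`.  Then every `Y ⊆ Int(L(J)) \ {∅}` that
is dense in `U` has cardinality at least `σ`; hence `πχ(U) ≥ σ`. -/
theorem pi_character_lower_bound (lam σ : Cardinal.{0}) (J L : Type 1)
    [LinearOrder J] [LinearOrder L]
    (hσreg : σ.IsRegular) (hσinf : ℵ₀ ≤ σ) (hσlam : σ.ord + 1 < lam.ord)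
    (y : Ordinal → J)
    (hyinj : ∀ α < lam.ord, ∀ β < lam.ord, y α = y β → α = β)
    (hysurj : ∀ x : J, ∃ α < lam.ord, y α = x)
    (e : L ≃ {p : Ordinal × Ordinal // p.2 < p.1 ∧ p.1 < lam.ord})
    (he : ∀ l l' : L, l < l' ↔
      (y (e l).1.1 < y (e l').1.1 ∨ ((e l).1.1 = (e l').1.1 ∧ (e l).1.2 < (e l').1.2)))
    (hσsucc : σ.ord < σ.ord + 1)
    (U : Set (Set L))
    (hU : IsUltrafilterOn {s | InIntervalAlgebra L s} U)
    (hUgen : ∀ s : Set L, s ∈ U ↔ (InIntervalAlgebra L s ∧ ∃ α, ∃ hα : α < σ.ord,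
      Set.Ico (e.symm ⟨(σ.ord + 1, α), hα.trans hσsucc, hσlam⟩)
              (e.symm ⟨(σ.ord + 1, σ.ord), hσsucc, hσlam⟩) ⊆ s)) :
    ∀ Y : Set (Set L), (∀ s ∈ Y, InIntervalAlgebra L s ∧ s ≠ ∅) →
      (∀ u ∈ U, ∃ s ∈ Y, s ⊆ u) → Cardinal.lift.{1} σ ≤ #Y := by
  intro Y hY hdense
  -- notation
  set top : L := e.symm ⟨(σ.ord + 1, σ.ord), hσsucc, hσlam⟩ with htop
  -- key structural claim about points of the generating intervals
  have claimA : ∀ α, ∀ hα : α < σ.ord, ∀ l ∈ Set.Ico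
      (e.symm ⟨(σ.ord + 1, α), hα.trans hσsucc, hσlam⟩) top,
      (e l).1.1 = σ.ord + 1 ∧ α ≤ (e l).1.2 ∧ (e l).1.2 < σ.ord := by
    intro α hα l hl
    obtain ⟨hxl, hlt⟩ := hl
    have hetop : (e top).1 = (σ.ord + 1, σ.ord) := by
      simp [htop]
    have hex : (e (e.symm ⟨(σ.ord + 1, α), hα.trans hσsucc, hσlam⟩)).1 = (σ.ord + 1, α) := by
      simp
    rcases eq_or_lt_of_le hxl with heq | hlt2
    · rw [← heq, hex]
      exact ⟨rfl, le_refl _, hα⟩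
    · have h1 := (he _ _).1 hlt2
      have h2 := (he _ _).1 hlt
      rw [hex] at h1
      rw [hetop] at h2
      rcases h1 with h1 | h1
      · rcases h2 with h2 | h2
        · exact absurd (h1.trans h2) (lt_irrefl _)
        · rw [h2.1] at h1; exact absurd h1 (lt_irrefl _)
      · rcases h2 with h2 | h2
        · rw [← h1.1] at h2; exact absurd h2 (lt_irrefl _)
        · exact ⟨h1.1.symm, le_of_lt h1.2, h2.2⟩
  -- the generating intervals belong to U
  have hIU : ∀ α, ∀ hα : α < σ.ord,
      Set.Ico (e.symm ⟨(σ.ord + 1, α), hα.trans hσsucc, hσlam⟩) top ∈ U := by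
    intro α hα
    rw [hUgen]
    exact ⟨InIntervalAlgebra.ico _ _, α, hα, subset_rfl⟩
  by_contra hcon
  push_neg at hcon
  -- pick a point in each member of Y (all are nonempty)
  have hne : ∀ s : Y, (s : Set L).Nonempty := by
    intro ⟨s, hs⟩
    exact Set.nonempty_iff_ne_empty.2 (hY s hs).2
  have hσpos : (0 : Ordinal) < σ.ord := by
    rw [Cardinal.lt_ord]
    simpa using (Cardinal.aleph0_pos.trans_le hσinf)
  -- for each s ∈ Y, an ordinal bound
  set g : Y → Ordinal.{0} := fun s =>
    if (e (hne s).some).1.2 < σ.ord then (e (hne s).some).1.2 else 0 with hg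
  have hglt : ∀ s : Y, g s < σ.ord := by
    intro s
    rw [hg]
    dsimp only
    split
    · assumption
    · exact hσpos
  have hgge : ∀ α, ∀ hα : α < σ.ord, ∀ s : Y,
      (s : Set L) ⊆ Set.Ico (e.symm ⟨(σ.ord + 1, α), hα.trans hσsucc, hσlam⟩) top →
      α ≤ g s := by
    intro α hα s hsub
    have hmem := hsub (hne s).some_mem
    obtain ⟨-, h2, h3⟩ := claimA α hα _ hmem
    rw [hg]
    dsimp only
    rw [if_pos h3]
    exact h2
  -- regularity of the lifted cardinal
  have hreg' : (Cardinal.lift.{1} σ).IsRegular := by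
    constructor
    · exact le_trans (by simpa using le_refl (Cardinal.lift.{1} ℵ₀)) (Cardinal.lift_le.2 hσinf)
    · rw [← Cardinal.lift_ord, ← Ordinal.lift_cof, hσreg.cof_eq]
  -- the supremum of the bounds is below σ
  have hsup : iSup (fun s : Y => Ordinal.lift.{1} (g s)) < (Cardinal.lift.{1} σ).ord := by
    refine Cardinal.iSup_lt_ord_lift_of_isRegular.{1,0} hreg' ?_ ?_
    · simpa using hcon
    · intro s
      rw [← Cardinal.lift_ord]
      exact Ordinal.lift_lt.2 (hglt s)
  rw [← Cardinal.lift_ord] at hsup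
  obtain ⟨β, hβ, hβeq⟩ := Ordinal.lt_lift_iff.1 hsup
  -- pick α = β + 1 < σ.ord and derive a contradiction
  have hα : β + 1 < σ.ord := by
    rw [Ordinal.add_one_eq_succ]; exact (Cardinal.isSuccLimit_ord hσinf).succ_lt hβ
  obtain ⟨s, hsY, hsub⟩ := hdense _ (hIU (β + 1) hα)
  have h1 : β + 1 ≤ g ⟨s, hsY⟩ := hgge (β + 1) hα ⟨s, hsY⟩ hsub
  have h2 : Ordinal.lift.{1} (g ⟨s, hsY⟩) ≤ Ordinal.lift.{1} β := by
    rw [hβeq]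
    exact Ordinal.le_iSup (fun s : Y => Ordinal.lift.{1} (g s)) ⟨s, hsY⟩
  have h3 : g ⟨s, hsY⟩ ≤ β := Ordinal.lift_le.1 h2
  exact absurd (h1.trans h3) (by simp)
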